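/- arXiv:2108.05908 — 3 statements merged into one kernel-verified Lean document; each statement's English description precedes it below -/
import Mathlib

section
/- Let φ : (0,∞) → ℝ be convex with φ(1) = φ'(1) = 0 and φ''(1) > 0, having continuous second derivative on (0,∞), and let q > 0. Then there exists a constant C_φ (depending only on φ and q) such that for every n ≥ 1 and every vector L ∈ (0,∞)ⁿ with (1/n)Σᵢφ(Lᵢ) ≤ q/(2n), one has ‖L − 𝟙ₙ‖₂ ≤ C_φ; moreover, there exists a constant c_φ > 0 such that if in addition (1/n)Σᵢφ(Lᵢ) = q/(2n), then ‖L − 𝟙ₙ‖₂ ≥ c_φ. -/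
lemma aux_diff (φ : ℝ → ℝ) (hsmooth : ContDiffOn ℝ 2 φ (Set.Ioi (0 : ℝ))) :
    DifferentiableOn ℝ φ (Set.Ioi 0) ∧ DifferentiableOn ℝ (deriv φ) (Set.Ioi 0) ∧
      ContinuousOn (deriv (deriv φ)) (Set.Ioi 0) := by
  have h2 : ContDiffOn ℝ ((1:WithTop ℕ∞) + 1) φ (Set.Ioi 0) := by norm_num; exact hsmooth
  rw [contDiffOn_succ_iff_deriv_of_isOpen isOpen_Ioi] at h2
  obtain ⟨hd1, -, hc1⟩ := h2
  have h1 : ContDiffOn ℝ ((0:WithTop ℕ∞) + 1) (deriv φ) (Set.Ioi 0) := by norm_num; exact hc1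
  rw [contDiffOn_succ_iff_deriv_of_isOpen isOpen_Ioi] at h1
  obtain ⟨hd2, -, hc0⟩ := h1
  exact ⟨hd1, hd2, hc0.continuousOn⟩
lemma aux_min_lower (φ : ℝ → ℝ)
    (hconv : ConvexOn ℝ (Set.Ioi (0 : ℝ)) φ)
    (hφ1 : φ 1 = 0) (hφ'1 : deriv φ 1 = 0) (hφ''1 : 0 < iteratedDeriv 2 φ 1)
    (hsmooth : ContDiffOn ℝ 2 φ (Set.Ioi (0 : ℝ))) :
    ∃ δ α : ℝ, 0 < δ ∧ δ ≤ 1/2 ∧ 0 < α ∧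
      ∀ x : ℝ, 0 < x → α * min ((x - 1) ^ 2) (δ * |x - 1|) ≤ φ x := by
  obtain ⟨hd1, hd2, hc0⟩ := aux_diff φ hsmooth
  have hdd1 : iteratedDeriv 2 φ 1 = deriv (deriv φ) 1 := by
    simp [iteratedDeriv_succ, iteratedDeriv_one]
  set β := deriv (deriv φ) 1 / 2 with hβdef
  have hβ : 0 < β := by rw [hdd1] at hφ''1; positivity
  -- find δ
  have hcont : ContinuousAt (deriv (deriv φ)) 1 :=
    hc0.continuousAt (isOpen_Ioi.mem_nhds (by norm_num))
  have hev : ∀ᶠ y in nhds 1, deriv (deriv φ) y ∈ Set.Ioi β :=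
    hcont (Ioi_mem_nhds (by rw [hβdef]; linarith [hβ]))
  obtain ⟨ε, hε, hball⟩ := Metric.eventually_nhds_iff.1 hev
  set δ := min (ε/2) (1/2) with hδdef
  have hδ : 0 < δ := by positivity
  have hδle : δ ≤ 1/2 := min_le_right _ _
  have hJsub : Set.Icc (1-δ) (1+δ) ⊆ Set.Ioi (0:ℝ) := fun y hy => by
    simp only [Set.mem_Icc] at hy; exact Set.mem_Ioi.2 (by linarith [hy.1])
  have hJβ : ∀ y ∈ Set.Icc (1-δ) (1+δ), β < deriv (deriv φ) y := by
    intro y hy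
    simp only [Set.mem_Icc] at hy
    have : dist y 1 < ε := by
      rw [Real.dist_eq, abs_lt]
      have := min_le_left (ε/2) (1/2)
      constructor <;> linarith
    exact hball this
  -- derivative computations
  have hdF : ∀ y ∈ Set.Ioi (0:ℝ), HasDerivAt (fun y => φ y - β/2 * (y-1)^2)
      (deriv φ y - β * (y-1)) y := by
    intro y hy
    have h1 : HasDerivAt (fun y : ℝ => β/2 * (y-1)^2) (β * (y-1)) y := by
      have := (((hasDerivAt_id y).sub_const 1).pow 2).const_mul (β/2)
      simp only [id_eq] at this
      exact this.congr_deriv (by norm_num; ring)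
    exact ((hd1.differentiableAt (isOpen_Ioi.mem_nhds hy)).hasDerivAt).sub h1
  have hdh : ∀ y ∈ Set.Ioi (0:ℝ), HasDerivAt (fun y => deriv φ y - β * (y-1))
      (deriv (deriv φ) y - β) y := by
    intro y hy
    have h1 : HasDerivAt (fun y : ℝ => β * (y-1)) β y := by
      have := ((hasDerivAt_id y).sub_const 1).const_mul β
      simp only [id_eq] at this
      exact this.congr_deriv (by ring)
    exact ((hd2.differentiableAt (isOpen_Ioi.mem_nhds hy)).hasDerivAt).sub h1
  -- h monotone on J
  set J := Set.Icc (1-δ) (1+δ) with hJdef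
  have hintJ : interior J ⊆ Set.Ioi (0:ℝ) := interior_subset.trans hJsub
  have hmono : MonotoneOn (fun y => deriv φ y - β * (y-1)) J := by
    apply monotoneOn_of_deriv_nonneg (convex_Icc _ _)
    · exact fun y hy => ((hdh y (hJsub hy)).continuousAt).continuousWithinAt
    · exact fun y hy => ((hdh y (hintJ hy)).differentiableAt).differentiableWithinAt
    · intro y hy
      rw [(hdh y (hintJ hy)).deriv]
      have := hJβ y (interior_subset hy)
      linarith
  have h1mem : (1:ℝ) ∈ J := by simp only [hJdef, Set.mem_Icc]; constructor <;> linarith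
  have hh1 : deriv φ 1 - β * ((1:ℝ)-1) = 0 := by rw [hφ'1]; ring
  -- F ≥ 0 on J
  have hquad : ∀ x ∈ J, β/2 * (x-1)^2 ≤ φ x := by
    intro x hx
    simp only [hJdef, Set.mem_Icc] at hx
    rcases le_total 1 x with hx1 | hx1
    · have hmF : MonotoneOn (fun y => φ y - β/2 * (y-1)^2) (Set.Icc 1 (1+δ)) := by
        apply monotoneOn_of_deriv_nonneg (convex_Icc _ _)
        · intro y hy
          simp only [Set.mem_Icc] at hy
          exact ((hdF y (by simp only [Set.mem_Ioi]; linarith)).continuousAt).continuousWithinAt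
        · intro y hy
          rw [interior_Icc] at hy; simp only [Set.mem_Ioo] at hy
          exact ((hdF y (by simp only [Set.mem_Ioi]; linarith [hy.1])).differentiableAt).differentiableWithinAt
        · intro y hy
          rw [interior_Icc] at hy; simp only [Set.mem_Ioo] at hy
          rw [(hdF y (by simp only [Set.mem_Ioi]; linarith [hy.1])).deriv]
          have hyJ : y ∈ J := by simp only [hJdef, Set.mem_Icc]; constructor <;> linarith [hy.1, hy.2]
          have := hmono h1mem hyJ (le_of_lt hy.1)
          norm_num [hφ'1] at this; linarith
      have := hmF (Set.mem_Icc.2 ⟨le_refl 1, by linarith⟩) (Set.mem_Icc.2 ⟨hx1, by linarith [hx.2]⟩) hx1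
      simp only [hφ1] at this
      nlinarith [this]
    · have hmF : AntitoneOn (fun y => φ y - β/2 * (y-1)^2) (Set.Icc (1-δ) 1) := by
        apply antitoneOn_of_deriv_nonpos (convex_Icc _ _)
        · intro y hy
          simp only [Set.mem_Icc] at hy
          exact ((hdF y (by simp only [Set.mem_Ioi]; linarith [hy.1])).continuousAt).continuousWithinAt
        · intro y hy
          rw [interior_Icc] at hy; simp only [Set.mem_Ioo] at hy
          exact ((hdF y (by simp only [Set.mem_Ioi]; linarith [hy.1])).differentiableAt).differentiableWithinAt
        · intro y hy
          rw [interior_Icc] at hy; simp only [Set.mem_Ioo] at hy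
          rw [(hdF y (by simp only [Set.mem_Ioi]; linarith [hy.1])).deriv]
          have hyJ : y ∈ J := by simp only [hJdef, Set.mem_Icc]; constructor <;> linarith [hy.1, hy.2]
          have := hmono hyJ h1mem (le_of_lt hy.2)
          norm_num [hφ'1] at this; linarith
      have := hmF (Set.mem_Icc.2 ⟨by linarith [hx.1], hx1⟩) (Set.mem_Icc.2 ⟨by linarith, le_refl 1⟩) hx1
      simp only [hφ1] at this
      nlinarith [this]
  -- combine
  refine ⟨δ, β/2, hδ, hδle, by positivity, fun x hx => ?_⟩
  rcases le_or_gt (|x - 1|) δ with hcase | hcase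
  · have hxJ : x ∈ J := by
      rw [abs_le] at hcase
      simp only [hJdef, Set.mem_Icc]; constructor <;> linarith [hcase.1, hcase.2]
    calc β/2 * min ((x-1)^2) (δ * |x-1|) ≤ β/2 * (x-1)^2 := by
          apply mul_le_mul_of_nonneg_left (min_le_left _ _) (by positivity)
      _ ≤ φ x := hquad x hxJ
  · have hmin : min ((x-1)^2) (δ * |x-1|) ≤ δ * |x-1| := min_le_right _ _
    have hkey : β/2 * (δ * |x-1|) ≤ φ x := by
      rcases le_or_gt 1 x with hx1 | hx1
      · -- x > 1 + δ
        have habs : |x - 1| = x - 1 := abs_of_nonneg (by linarith)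
        rw [habs] at hcase ⊢
        have hx1δ : (1:ℝ) + δ ∈ Set.Ioi (0:ℝ) := by simp only [Set.mem_Ioi]; linarith
        have hφδ : β/2 * δ^2 ≤ φ (1+δ) := by
          have := hquad (1+δ) (by simp only [hJdef, Set.mem_Icc]; constructor <;> linarith)
          simpa using this
        have hd : 0 < x - 1 := by linarith
        have hne : x - 1 ≠ 0 := ne_of_gt hd
        have hconvineq := hconv.2 (Set.mem_Ioi.2 one_pos) (Set.mem_Ioi.2 hx)
          (show (0:ℝ) ≤ (x-1-δ)/(x-1) from div_nonneg (by linarith) (by linarith))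
          (show (0:ℝ) ≤ δ/(x-1) from div_nonneg hδ.le (by linarith))
          (show (x-1-δ)/(x-1) + δ/(x-1) = 1 by field_simp; ring)
        simp only [smul_eq_mul, mul_one, hφ1, mul_zero, zero_add] at hconvineq
        have heq : (x-1-δ)/(x-1) + δ/(x-1) * x = 1 + δ := by field_simp; ring
        rw [heq] at hconvineq
        rw [div_mul_eq_mul_div, le_div_iff₀ hd] at hconvineq
        have h1 : β/2*δ^2*(x-1) ≤ δ * φ x :=
          le_trans (mul_le_mul_of_nonneg_right hφδ hd.le) hconvineq
        have h2 : δ * (β/2*(δ*(x-1))) ≤ δ * φ x := by nlinarith [h1]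
        exact le_of_mul_le_mul_left h2 hδ
      · -- x < 1 - δ
        have habs : |x - 1| = 1 - x := by rw [abs_sub_comm]; exact abs_of_nonneg (by linarith)
        rw [habs] at hcase ⊢
        have hφδ : β/2 * δ^2 ≤ φ (1-δ) := by
          have := hquad (1-δ) (by simp only [hJdef, Set.mem_Icc]; constructor <;> linarith)
          nlinarith [this]
        have hd : 0 < 1 - x := by linarith
        have hne : 1 - x ≠ 0 := ne_of_gt hd
        have hconvineq := hconv.2 (Set.mem_Ioi.2 hx) (Set.mem_Ioi.2 one_pos)
          (show (0:ℝ) ≤ δ/(1-x) from div_nonneg hδ.le (by linarith))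
          (show (0:ℝ) ≤ (1-x-δ)/(1-x) from div_nonneg (by linarith) (by linarith))
          (show δ/(1-x) + (1-x-δ)/(1-x) = 1 by field_simp; ring)
        simp only [smul_eq_mul, mul_one, hφ1, mul_zero, add_zero] at hconvineq
        have heq : δ/(1-x) * x + (1-x-δ)/(1-x) = 1 - δ := by field_simp; ring
        rw [heq] at hconvineq
        rw [div_mul_eq_mul_div, le_div_iff₀ hd] at hconvineq
        have h1 : β/2*δ^2*(1-x) ≤ δ * φ x :=
          le_trans (mul_le_mul_of_nonneg_right hφδ hd.le) hconvineq
        have h2 : δ * (β/2*(δ*(1-x))) ≤ δ * φ x := by nlinarith [h1]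
        exact le_of_mul_le_mul_left h2 hδ
    calc β/2 * min ((x-1)^2) (δ * |x-1|) ≤ β/2 * (δ * |x-1|) := by
          apply mul_le_mul_of_nonneg_left hmin (by positivity)
      _ ≤ φ x := hkey
lemma aux_quad_upper (φ : ℝ → ℝ) (hφ1 : φ 1 = 0) (hφ'1 : deriv φ 1 = 0)
    (hsmooth : ContDiffOn ℝ 2 φ (Set.Ioi (0 : ℝ))) :
    ∃ M : ℝ, 1 ≤ M ∧ ∀ x ∈ Set.Icc (1/2 : ℝ) (3/2), φ x ≤ M * (x - 1) ^ 2 := by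
  obtain ⟨hd1, hd2, hc0⟩ := aux_diff φ hsmooth
  have hsub : Set.Icc (1/2 : ℝ) (3/2) ⊆ Set.Ioi 0 := fun x hx => by
    simp only [Set.mem_Icc] at hx; exact Set.mem_Ioi.2 (by linarith [hx.1])
  obtain ⟨B, hB⟩ := (isCompact_Icc (a := (1/2:ℝ)) (b := 3/2)).exists_bound_of_continuousOn
    (hc0.mono hsub)
  set M := max B 1 with hM
  refine ⟨M, le_max_right _ _, fun x hx => ?_⟩
  have hMB : ∀ y ∈ Set.Icc (1/2:ℝ) (3/2), ‖deriv (deriv φ) y‖ ≤ M :=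
    fun y hy => (hB y hy).trans (le_max_left _ _)
  -- step A : |deriv φ y| ≤ M * |y - 1| on Icc
  have hstepA : ∀ y ∈ Set.Icc (1/2:ℝ) (3/2), |deriv φ y| ≤ M * |y - 1| := by
    intro y hy
    have := Convex.norm_image_sub_le_of_norm_hasDerivWithin_le
      (f := deriv φ) (f' := deriv (deriv φ)) (s := Set.Icc (1/2:ℝ) (3/2))
      (fun z hz => ((hd2.differentiableAt (isOpen_Ioi.mem_nhds (hsub hz))).hasDerivAt).hasDerivWithinAt)
      hMB (convex_Icc _ _) (show (1:ℝ) ∈ Set.Icc (1/2:ℝ) (3/2) by norm_num) hy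
    simpa [hφ'1, Real.norm_eq_abs] using this
  -- segment between 1 and x
  have hseg : Set.uIcc (1:ℝ) x ⊆ Set.Icc (1/2:ℝ) (3/2) := by
    apply Set.uIcc_subset_Icc ?_ hx
    constructor <;> norm_num
  have hstepB := Convex.norm_image_sub_le_of_norm_hasDerivWithin_le
      (f := φ) (f' := deriv φ) (s := Set.uIcc (1:ℝ) x) (C := M * |x - 1|)
      (fun z hz => ((hd1.differentiableAt (isOpen_Ioi.mem_nhds (hsub (hseg hz)))).hasDerivAt).hasDerivWithinAt)
      (fun z hz => by
        refine (hstepA z (hseg hz)).trans ?_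
        have h1 : |z - 1| ≤ |x - 1| := by
          rcases Set.mem_uIcc.1 hz with ⟨h, h'⟩ | ⟨h, h'⟩ <;> rw [abs_le] <;>
            constructor <;> cases abs_cases (x - 1) <;> nlinarith
        have hM0 : (0:ℝ) ≤ M := le_trans zero_le_one (le_max_right _ _)
        nlinarith)
      (convex_uIcc _ _) Set.left_mem_uIcc Set.right_mem_uIcc
  rw [hφ1, sub_zero, Real.norm_eq_abs, Real.norm_eq_abs] at hstepB
  calc φ x ≤ |φ x| := le_abs_self _
    _ ≤ M * |x-1| * |x-1| := hstepB
    _ = M * (x-1)^2 := by rw [mul_assoc, ← abs_mul, ← sq, abs_sq]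


open Finset

/-- **Lemma 6.1 (Lemma 13 of Duchi et al.): the divergence ball confines `L` to a Euclidean
ring around `𝟙ₙ`.**  If `φ : (0,∞) → ℝ` is convex with `φ(1) = φ'(1) = 0`, `φ''(1) > 0` and a
continuous second derivative on `(0,∞)`, and `q > 0`, then there is a constant `C_φ` such that
every `L ∈ (0,∞)ⁿ` with `(1/n)·Σᵢ φ(Lᵢ) ≤ q/(2n)` satisfies `‖L − 𝟙ₙ‖₂ ≤ C_φ`, and a constant
`c_φ > 0` such that every such `L` with `(1/n)·Σᵢ φ(Lᵢ) = q/(2n)` satisfies `‖L − 𝟙ₙ‖₂ ≥ c_φ`. -/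
theorem dro_likelihood_ratio_ring (φ : ℝ → ℝ) (q : ℝ) (hq : 0 < q)
    (hconv : ConvexOn ℝ (Set.Ioi (0 : ℝ)) φ)
    (hφ1 : φ 1 = 0) (hφ'1 : deriv φ 1 = 0) (hφ''1 : 0 < iteratedDeriv 2 φ 1)
    (hsmooth : ContDiffOn ℝ 2 φ (Set.Ioi (0 : ℝ))) :
    ∃ Cφ : ℝ, ∃ cφ : ℝ, 0 < cφ ∧
      (∀ n : ℕ, 1 ≤ n → ∀ L : Fin n → ℝ, (∀ i, 0 < L i) →
          ((n : ℝ))⁻¹ * ∑ i : Fin n, φ (L i) ≤ q / (2 * (n : ℝ)) →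
          Real.sqrt (∑ i : Fin n, (L i - 1) ^ 2) ≤ Cφ) ∧
      (∀ n : ℕ, 1 ≤ n → ∀ L : Fin n → ℝ, (∀ i, 0 < L i) →
          ((n : ℝ))⁻¹ * ∑ i : Fin n, φ (L i) = q / (2 * (n : ℝ)) →
          cφ ≤ Real.sqrt (∑ i : Fin n, (L i - 1) ^ 2)) := by
  obtain ⟨δ, α, hδ, hδle, hα, hmin⟩ := aux_min_lower φ hconv hφ1 hφ'1 hφ''1 hsmooth
  obtain ⟨M, hM1, hMub⟩ := aux_quad_upper φ hφ1 hφ'1 hsmooth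
  have hM0 : (0:ℝ) < M := lt_of_lt_of_le one_pos hM1
  set K := q / (2 * α) with hK
  have hK0 : 0 < K := by positivity
  refine ⟨Real.sqrt (K + K^2/δ^2), min (1/2) (Real.sqrt (q/(2*M))), ?_, ?_, ?_⟩
  · exact lt_min (by norm_num) (Real.sqrt_pos.2 (by positivity))
  · -- upper bound
    intro n hn L hL hsum
    have hn0 : (0:ℝ) < (n:ℝ) := by exact_mod_cast Nat.pos_of_ne_zero (by omega)
    have hne : (n:ℝ) ≠ 0 := ne_of_gt hn0
    have hPhiSum : ∑ i : Fin n, φ (L i) ≤ q / 2 := by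
      have h := mul_le_mul_of_nonneg_left hsum (le_of_lt hn0)
      rw [show (n:ℝ) * ((n:ℝ)⁻¹ * ∑ i : Fin n, φ (L i)) = ∑ i : Fin n, φ (L i) by
            field_simp,
          show (n:ℝ) * (q / (2*(n:ℝ))) = q/2 by field_simp] at h
      exact h
    have hm0 : ∀ i : Fin n, 0 ≤ min ((L i - 1)^2) (δ * |L i - 1|) :=
      fun i => le_min (sq_nonneg _) (by positivity)
    have hMinSum : ∑ i : Fin n, min ((L i - 1)^2) (δ * |L i - 1|) ≤ K := by
      have h1 : α * ∑ i : Fin n, min ((L i - 1)^2) (δ * |L i - 1|) ≤ q/2 := by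
        rw [Finset.mul_sum]
        exact le_trans (Finset.sum_le_sum fun i _ => hmin (L i) (hL i)) hPhiSum
      rw [hK, le_div_iff₀ (by positivity : (0:ℝ) < 2*α)]
      linarith
    have hMinSum0 : 0 ≤ ∑ i : Fin n, min ((L i - 1)^2) (δ * |L i - 1|) :=
      Finset.sum_nonneg fun i _ => hm0 i
    have hsq : ∀ i : Fin n, (L i - 1)^2 ≤
        min ((L i - 1)^2) (δ * |L i - 1|) + (min ((L i - 1)^2) (δ * |L i - 1|))^2/δ^2 := by
      intro i
      rcases min_cases ((L i - 1)^2) (δ * |L i - 1|) with ⟨he, _⟩ | ⟨he, _⟩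
      · rw [he]
        have : (0:ℝ) ≤ ((L i - 1)^2)^2/δ^2 := by positivity
        linarith
      · rw [he]
        have h2 : (δ * |L i - 1|)^2/δ^2 = (L i - 1)^2 := by
          rw [mul_pow, sq_abs]; field_simp
        rw [h2]
        have : (0:ℝ) ≤ δ * |L i - 1| := by positivity
        linarith
    have hfinal : ∑ i : Fin n, (L i - 1)^2 ≤ K + K^2/δ^2 := by
      calc ∑ i : Fin n, (L i - 1)^2
          ≤ ∑ i : Fin n, (min ((L i - 1)^2) (δ * |L i - 1|)
              + (min ((L i - 1)^2) (δ * |L i - 1|))^2/δ^2) :=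
            Finset.sum_le_sum fun i _ => hsq i
        _ = (∑ i : Fin n, min ((L i - 1)^2) (δ * |L i - 1|))
              + (∑ i : Fin n, (min ((L i - 1)^2) (δ * |L i - 1|))^2)/δ^2 := by
            rw [Finset.sum_add_distrib, Finset.sum_div]
        _ ≤ K + (∑ i : Fin n, min ((L i - 1)^2) (δ * |L i - 1|))^2/δ^2 := by
            have h3 := Finset.sum_sq_le_sq_sum_of_nonneg (s := Finset.univ)
              (f := fun i : Fin n => min ((L i - 1)^2) (δ * |L i - 1|)) (fun i _ => hm0 i)
            have h4 : (∑ i : Fin n, (min ((L i - 1)^2) (δ * |L i - 1|))^2)/δ^2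
                ≤ (∑ i : Fin n, min ((L i - 1)^2) (δ * |L i - 1|))^2/δ^2 := by gcongr
            linarith
        _ ≤ K + K^2/δ^2 := by
            have h5 : (∑ i : Fin n, min ((L i - 1)^2) (δ * |L i - 1|))^2 ≤ K^2 :=
              pow_le_pow_left₀ hMinSum0 hMinSum 2
            have h6 : (∑ i : Fin n, min ((L i - 1)^2) (δ * |L i - 1|))^2/δ^2 ≤ K^2/δ^2 := by
              gcongr
            linarith
    exact Real.sqrt_le_sqrt hfinal
  · -- lower bound
    intro n hn L hL hsumeq
    have hn0 : (0:ℝ) < (n:ℝ) := by exact_mod_cast Nat.pos_of_ne_zero (by omega)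
    have hne : (n:ℝ) ≠ 0 := ne_of_gt hn0
    have hPhiSum : ∑ i : Fin n, φ (L i) = q / 2 := by
      have h := congrArg (fun z => (n:ℝ) * z) hsumeq
      beta_reduce at h
      rw [show (n:ℝ) * ((n:ℝ)⁻¹ * ∑ i : Fin n, φ (L i)) = ∑ i : Fin n, φ (L i) by
            field_simp,
          show (n:ℝ) * (q / (2*(n:ℝ))) = q/2 by field_simp] at h
      exact h
    by_contra hcon
    push_neg at hcon
    set c := min (1/2 : ℝ) (Real.sqrt (q/(2*M))) with hc
    have hc0 : 0 < c := lt_min (by norm_num) (Real.sqrt_pos.2 (by positivity))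
    have hSum0 : 0 ≤ ∑ i : Fin n, (L i - 1)^2 := Finset.sum_nonneg fun i _ => sq_nonneg _
    have hS : ∑ i : Fin n, (L i - 1)^2 < c^2 := by
      have := pow_lt_pow_left₀ hcon (Real.sqrt_nonneg _) (two_ne_zero)
      rwa [Real.sq_sqrt hSum0] at this
    have hc2a : c^2 ≤ 1/4 := by
      have h1 : c ≤ 1/2 := min_le_left _ _
      nlinarith
    have hc2b : c^2 ≤ q/(2*M) := by
      have h1 : c ≤ Real.sqrt (q/(2*M)) := min_le_right _ _
      have h2 : c^2 ≤ (Real.sqrt (q/(2*M)))^2 := pow_le_pow_left₀ hc0.le h1 2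
      rwa [Real.sq_sqrt (by positivity)] at h2
    have hLmem : ∀ i : Fin n, L i ∈ Set.Icc (1/2 : ℝ) (3/2) := by
      intro i
      have h1 : (L i - 1)^2 ≤ ∑ j : Fin n, (L j - 1)^2 :=
        Finset.single_le_sum (f := fun j : Fin n => (L j - 1)^2)
          (fun j _ => sq_nonneg _) (Finset.mem_univ i)
      have h2 : (L i - 1)^2 < 1/4 := by linarith
      constructor <;> nlinarith
    have hup : ∑ i : Fin n, φ (L i) ≤ M * ∑ i : Fin n, (L i - 1)^2 := by
      rw [Finset.mul_sum]
      exact Finset.sum_le_sum fun i _ => hMub (L i) (hLmem i)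
    have hfin : M * (∑ i : Fin n, (L i - 1)^2) < M * c^2 :=
      mul_lt_mul_of_pos_left hS hM0
    have hMc : M * c^2 ≤ q/2 := by
      have := mul_le_mul_of_nonneg_left hc2b hM0.le
      rwa [show M * (q/(2*M)) = q/2 by field_simp] at this
    linarith [hPhiSum, hup, hfin, hMc]
end

section
/- Let n ≥ 1, let φ : [0,∞) → (−∞,∞] be convex and lower semicontinuous with φ finite on (0,∞), let Δ = {p ∈ ℝⁿ : pᵢ ≥ 0, Σpᵢ = 1}, define the divergence D(p) = (1/n)·Σᵢ φ(n·pᵢ), let η ∈ ℝ, and suppose the feasible set S = {p ∈ Δ : D(p) ≤ η} is nonempty. Let ψ : Δ → ℝ be continuous, let ψ_min = min_{p∈S} ψ(p) and ψ_max = max_{p∈S} ψ(p) (attained since S is compact), and define the profile divergence W(t) = inf{D(p) : p ∈ Δ, ψ(p) = t} (with inf ∅ = +∞). Then {t ∈ ℝ : W(t) ≤ η} = [ψ_min, ψ_max]. In particular, the confidence region produced by thresholding the profile divergence (the empirical-likelihood construction) coincides with the interval of optimal values of the pair of distributionally robust optimization problems max/min ψ(p) subject to D(p) ≤ η. -/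
open Finset Filter

noncomputable section

/-- Coercion of a finite real sum into `EReal`. -/
private lemma ereal_coe_sum {ι : Type*} (s : Finset ι) (f : ι → ℝ) :
    ((∑ i ∈ s, f i : ℝ) : EReal) = ∑ i ∈ s, ((f i : EReal)) := by
  classical
  induction s using Finset.cons_induction with
  | empty => simp
  | cons a s ha ih => rw [Finset.sum_cons, Finset.sum_cons, EReal.coe_add, ih]

/-- A finite sum of non-`⊥` extended reals is non-`⊥`. -/
private lemma ereal_sum_ne_bot {ι : Type*} (s : Finset ι) (f : ι → EReal)
    (h : ∀ i ∈ s, f i ≠ ⊥) : (∑ i ∈ s, f i) ≠ ⊥ := by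
  classical
  induction s using Finset.cons_induction with
  | empty => simp
  | cons a s ha ih =>
    rw [Finset.sum_cons]
    simp only [ne_eq, EReal.add_eq_bot_iff, not_or]
    exact ⟨h a (Finset.mem_cons_self a s), ih fun i hi => h i (Finset.mem_cons_of_mem hi)⟩

/-- Lower semicontinuity along a convergent sequence in the set. -/
private lemma lsc_le_liminf_seq {X : Type*} [TopologicalSpace X] {f : X → EReal}
    {s : Set X} (hf : LowerSemicontinuousOn f s) {p : ℕ → X} {a : X}
    (ha : a ∈ s) (hmem : ∀ k, p k ∈ s) (hp : Tendsto p atTop (nhds a)) :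
    f a ≤ liminf (fun k => f (p k)) atTop := by
  have h1 : f a ≤ liminf f (nhdsWithin a s) := LowerSemicontinuousWithinAt.le_liminf (hf a ha)
  have h2 : Tendsto p atTop (nhdsWithin a s) :=
    tendsto_nhdsWithin_of_tendsto_nhds_of_eventually_within p hp
      (Eventually.of_forall hmem)
  calc f a ≤ liminf f (nhdsWithin a s) := h1
    _ ≤ liminf f (map p atTop) := liminf_le_liminf_of_le h2
    _ = liminf (fun k => f (p k)) atTop := (liminf_comp f p atTop).symm

/-- **Duality between DRO and empirical likelihood on the `n`-point simplex (Section 6.1).**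
Let `φ : [0,∞) → (−∞,∞]` be convex, lower semicontinuous and finite on `(0,∞)`, let
`D(p) = (1/n)·Σᵢ φ(n·pᵢ)` on the simplex `Δ`, let `S = {p ∈ Δ : D(p) ≤ η}` be nonempty, let
`ψ : Δ → ℝ` be continuous, and let `W(t) = inf {D(p) : p ∈ Δ, ψ(p) = t}` (with `inf ∅ = ⊤`).
Then `{t : W(t) ≤ η} = [ψ_min, ψ_max]`, where `ψ_min`/`ψ_max` are the optimal values of the
DRO pair `min/max ψ(p)` over `S`. -/
theorem dro_el_duality (n : ℕ) (hn : 1 ≤ n) (φ : ℝ → EReal)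
    (hne_bot : ∀ x : ℝ, 0 ≤ x → φ x ≠ ⊥)
    (hfin : ∀ x : ℝ, 0 < x → φ x ≠ ⊤)
    (hlsc : LowerSemicontinuousOn φ (Set.Ici (0 : ℝ)))
    (hconv : ∀ x ∈ Set.Ici (0 : ℝ), ∀ y ∈ Set.Ici (0 : ℝ), ∀ t ∈ Set.Icc (0 : ℝ) 1,
      φ (t * x + (1 - t) * y) ≤ (t : EReal) * φ x + ((1 - t : ℝ) : EReal) * φ y)
    (η : ℝ)
    (D : (Fin n → ℝ) → EReal)
    (hD : ∀ p : Fin n → ℝ, D p = ((n : ℝ)⁻¹ : EReal) * ∑ i : Fin n, φ ((n : ℝ) * p i))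
    (S : Set (Fin n → ℝ))
    (hS : S = {p | p ∈ stdSimplex ℝ (Fin n) ∧ D p ≤ (η : EReal)})
    (hSne : S.Nonempty)
    (ψ : (Fin n → ℝ) → ℝ) (hψ : ContinuousOn ψ (stdSimplex ℝ (Fin n)))
    (W : ℝ → EReal)
    (hW : ∀ t : ℝ, W t = sInf (D '' {p | p ∈ stdSimplex ℝ (Fin n) ∧ ψ p = t})) :
    {t : ℝ | W t ≤ (η : EReal)} = Set.Icc (sInf (ψ '' S)) (sSup (ψ '' S)) := by
  classical
  have hn0 : (n : ℝ) ≠ 0 := Nat.cast_ne_zero.2 (by omega)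
  have hnpos : (0 : ℝ) < (n : ℝ) := Nat.cast_pos.2 (by omega)
  have hD' : ∀ p : Fin n → ℝ,
      D p = (((n : ℝ)⁻¹ : ℝ) : EReal) * ∑ i : Fin n, φ ((n : ℝ) * p i) := by
    intro p; rw [hD p, EReal.coe_inv]
  set Δ : Set (Fin n → ℝ) := stdSimplex ℝ (Fin n) with hΔdef
  have hΔc : IsCompact Δ := isCompact_stdSimplex _ _
  have hΔcl : IsClosed Δ := hΔc.isClosed
  -- nonnegativity of n * p i on the simplex
  have hnn : ∀ p ∈ Δ, ∀ i : Fin n, (0 : ℝ) ≤ (n : ℝ) * p i := by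
    intro p hp i
    exact mul_nonneg hnpos.le (hp.1 i)
  -- each summand is lower semicontinuous on the simplex
  have hterm : ∀ i : Fin n,
      LowerSemicontinuousOn (fun p : Fin n → ℝ => φ ((n : ℝ) * p i)) Δ := by
    intro i x hx y hy
    have hx0 : ((n : ℝ) * x i) ∈ Set.Ici (0 : ℝ) := hnn x hx i
    have hev := hlsc _ hx0 y hy
    have hc : ContinuousWithinAt (fun p : Fin n → ℝ => (n : ℝ) * p i) Δ x :=
      (continuous_const.mul (continuous_apply i)).continuousWithinAt
    have ht : Tendsto (fun p : Fin n → ℝ => (n : ℝ) * p i)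
        (nhdsWithin x Δ) (nhdsWithin ((n : ℝ) * x i) (Set.Ici 0)) :=
      hc.tendsto_nhdsWithin (fun p hp => hnn p hp i)
    exact ht.eventually hev
  -- the sum is lower semicontinuous on the simplex
  have hsum_ne_bot : ∀ p ∈ Δ, ∀ (s : Finset (Fin n)),
      (∑ i ∈ s, φ ((n : ℝ) * p i)) ≠ ⊥ := by
    intro p hp s
    exact ereal_sum_ne_bot s _ (fun i _ => hne_bot _ (hnn p hp i))
  have hg_lsc : ∀ s : Finset (Fin n),
      LowerSemicontinuousOn (fun p : Fin n → ℝ => ∑ i ∈ s, φ ((n : ℝ) * p i)) Δ := by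
    intro s
    induction s using Finset.cons_induction with
    | empty => simpa using lowerSemicontinuousOn_const (s := Δ) (z := (0 : EReal))
    | cons a s ha ih =>
      have : LowerSemicontinuousOn
          (fun p : Fin n → ℝ => φ ((n : ℝ) * p a) + ∑ i ∈ s, φ ((n : ℝ) * p i)) Δ := by
        apply LowerSemicontinuousOn.add' (hterm a) ih
        intro x hx
        apply EReal.continuousAt_add
        · exact Or.inr (hsum_ne_bot x hx s)
        · exact Or.inl (hne_bot _ (hnn x hx a))
      simpa only [Finset.sum_cons] using this
  -- D is lower semicontinuous on the simplex
  have hmulc : Continuous (fun x : EReal => (((n : ℝ)⁻¹ : ℝ) : EReal) * x) := by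
    rw [continuous_iff_continuousAt]
    intro x
    have hmc : ContinuousAt (fun q : EReal × EReal => q.1 * q.2)
        ((((n : ℝ)⁻¹ : ℝ) : EReal), x) := by
      apply EReal.continuousAt_mul
      · exact Or.inl (show (((n : ℝ)⁻¹ : ℝ) : EReal) ≠ 0 from
          EReal.coe_ne_zero.2 (inv_ne_zero hn0))
      · exact Or.inl (show (((n : ℝ)⁻¹ : ℝ) : EReal) ≠ 0 from
          EReal.coe_ne_zero.2 (inv_ne_zero hn0))
      · exact Or.inl (EReal.coe_ne_bot _)
      · exact Or.inl (EReal.coe_ne_top _)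
    exact hmc.comp ((continuous_const.prodMk continuous_id).continuousAt)
  have hcnonneg : (0 : EReal) ≤ (((n : ℝ)⁻¹ : ℝ) : EReal) :=
    EReal.coe_nonneg.2 (inv_nonneg.2 hnpos.le)
  have hmono : Monotone (fun x : EReal => (((n : ℝ)⁻¹ : ℝ) : EReal) * x) :=
    fun a b h => mul_le_mul_of_nonneg_left h hcnonneg
  have hD_lsc : LowerSemicontinuousOn D Δ := by
    have : D = (fun x : EReal => (((n : ℝ)⁻¹ : ℝ) : EReal) * x) ∘
        (fun p : Fin n → ℝ => ∑ i ∈ Finset.univ, φ ((n : ℝ) * p i)) := by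
      funext p; exact hD' p
    rw [this]
    exact hmulc.comp_lowerSemicontinuousOn (hg_lsc Finset.univ) hmono
  -- finiteness of the summands on the feasible region
  have hfinite : ∀ p ∈ Δ, D p ≤ (η : EReal) →
      ∃ U : Fin n → ℝ, (∀ i, φ ((n : ℝ) * p i) = (U i : EReal)) ∧
        (∑ i : Fin n, U i) ≤ n * η := by
    intro p hp hDp
    have hub : ∀ i : Fin n, φ ((n : ℝ) * p i) ≠ ⊤ := by
      intro i htop
      have hsum_top : (∑ j : Fin n, φ ((n : ℝ) * p j)) = ⊤ := by
        rw [← Finset.add_sum_erase _ _ (Finset.mem_univ i), htop]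
        exact EReal.top_add_of_ne_bot (hsum_ne_bot p hp _)
      have : D p = ⊤ := by
        rw [hD' p, hsum_top]
        exact EReal.mul_top_of_pos (EReal.coe_pos.2 (inv_pos.2 hnpos))
      rw [this] at hDp
      exact (EReal.coe_lt_top η).not_ge hDp
    refine ⟨fun i => (φ ((n : ℝ) * p i)).toReal, fun i =>
      (EReal.coe_toReal (hub i) (hne_bot _ (hnn p hp i))).symm, ?_⟩
    have hsumeq : (∑ i : Fin n, φ ((n : ℝ) * p i)) =
        (((∑ i : Fin n, (φ ((n : ℝ) * p i)).toReal : ℝ)) : EReal) := by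
      rw [ereal_coe_sum]
      exact Finset.sum_congr rfl fun i _ =>
        (EReal.coe_toReal (hub i) (hne_bot _ (hnn p hp i))).symm
    have h1 : ((((n : ℝ)⁻¹ * ∑ i : Fin n, (φ ((n : ℝ) * p i)).toReal : ℝ)) : EReal)
        ≤ (η : EReal) := by
      rw [EReal.coe_mul, ← hsumeq, ← hD' p]; exact hDp
    have h2 : (n : ℝ)⁻¹ * ∑ i : Fin n, (φ ((n : ℝ) * p i)).toReal ≤ η :=
      EReal.coe_le_coe_iff.1 h1
    calc (∑ i : Fin n, (φ ((n : ℝ) * p i)).toReal)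
        = (n : ℝ) * ((n : ℝ)⁻¹ * ∑ i : Fin n, (φ ((n : ℝ) * p i)).toReal) := by
          field_simp
      _ ≤ (n : ℝ) * η := by
          exact mul_le_mul_of_nonneg_left h2 hnpos.le
  -- conversely a bound on the sum of finite values gives a bound on D
  have hDle : ∀ p : Fin n → ℝ,
      (∑ i : Fin n, φ ((n : ℝ) * p i)) ≤ (((n : ℝ) * η : ℝ) : EReal) →
      D p ≤ (η : EReal) := by
    intro p hsum
    rw [hD' p]
    calc (((n : ℝ)⁻¹ : ℝ) : EReal) * ∑ i : Fin n, φ ((n : ℝ) * p i)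
        ≤ (((n : ℝ)⁻¹ : ℝ) : EReal) * (((n : ℝ) * η : ℝ) : EReal) :=
          mul_le_mul_of_nonneg_left hsum hcnonneg
      _ = (η : EReal) := by
          rw [← EReal.coe_mul]
          congr 1
          field_simp
  -- S is convex
  have hSconv : Convex ℝ S := by
    rw [hS]
    intro p hp q hq a b ha hb hab
    obtain ⟨U, hU, hUs⟩ := hfinite p hp.1 hp.2
    obtain ⟨V, hV, hVs⟩ := hfinite q hq.1 hq.2
    refine ⟨(convex_stdSimplex ℝ (Fin n)) hp.1 hq.1 ha hb hab, ?_⟩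
    apply hDle
    have hb' : b = 1 - a := by linarith
    have hterm_le : ∀ i : Fin n,
        φ ((n : ℝ) * (a • p + b • q) i) ≤ ((a * U i + b * V i : ℝ) : EReal) := by
      intro i
      have hrw : (n : ℝ) * (a • p + b • q) i
          = a * ((n : ℝ) * p i) + (1 - a) * ((n : ℝ) * q i) := by
        simp only [Pi.add_apply, Pi.smul_apply, smul_eq_mul, hb']
        ring
      have := hconv ((n : ℝ) * p i) (hnn p hp.1 i) ((n : ℝ) * q i) (hnn q hq.1 i)
        a ⟨ha, by linarith⟩
      rw [← hrw] at this
      calc φ ((n : ℝ) * (a • p + b • q) i)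
          ≤ (a : EReal) * φ ((n : ℝ) * p i) + ((1 - a : ℝ) : EReal) * φ ((n : ℝ) * q i) := this
        _ = ((a * U i + b * V i : ℝ) : EReal) := by
            rw [hU i, hV i, ← EReal.coe_mul, ← EReal.coe_mul, ← EReal.coe_add, hb']
    calc (∑ i : Fin n, φ ((n : ℝ) * (a • p + b • q) i))
        ≤ ∑ i : Fin n, ((a * U i + b * V i : ℝ) : EReal) :=
          Finset.sum_le_sum fun i _ => hterm_le i
      _ = ((∑ i : Fin n, (a * U i + b * V i) : ℝ) : EReal) := (ereal_coe_sum _ _).symm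
      _ ≤ (((n : ℝ) * η : ℝ) : EReal) := by
          rw [EReal.coe_le_coe_iff]
          have : (∑ i : Fin n, (a * U i + b * V i))
              = a * (∑ i : Fin n, U i) + b * (∑ i : Fin n, V i) := by
            rw [Finset.sum_add_distrib, ← Finset.mul_sum, ← Finset.mul_sum]
          rw [this]
          calc a * (∑ i : Fin n, U i) + b * (∑ i : Fin n, V i)
              ≤ a * ((n : ℝ) * η) + b * ((n : ℝ) * η) :=
                add_le_add (mul_le_mul_of_nonneg_left hUs ha)
                  (mul_le_mul_of_nonneg_left hVs hb)
            _ = (n : ℝ) * η := by rw [← add_mul, hab, one_mul]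
  -- S is closed, hence compact
  have hSsub : S ⊆ Δ := by rw [hS]; exact fun p hp => hp.1
  have hScl : IsClosed S := by
    apply IsSeqClosed.isClosed
    intro p a hmem hp
    have haΔ : a ∈ Δ := hΔcl.mem_of_tendsto hp
      (Eventually.of_forall fun k => hSsub (hmem k))
    have hDa : D a ≤ (η : EReal) := by
      have h1 : D a ≤ liminf (fun k => D (p k)) atTop :=
        lsc_le_liminf_seq hD_lsc haΔ (fun k => hSsub (hmem k)) hp
      have h2 : liminf (fun k => D (p k)) atTop ≤ (η : EReal) := by
        have : ∀ k, D (p k) ≤ (η : EReal) := by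
          intro k; have := hmem k; rw [hS] at this; exact this.2
        calc liminf (fun k => D (p k)) atTop
            ≤ liminf (fun _ : ℕ => (η : EReal)) atTop :=
              liminf_le_liminf (Eventually.of_forall this)
          _ = (η : EReal) := liminf_const _
      exact h1.trans h2
    rw [hS]; exact ⟨haΔ, hDa⟩
  have hScomp : IsCompact S := hΔc.of_isClosed_subset hScl hSsub
  -- the image ψ '' S
  have hψS : ContinuousOn ψ S := hψ.mono hSsub
  have himc : IsCompact (ψ '' S) := hScomp.image_of_continuousOn hψS
  have himconn : IsConnected (ψ '' S) :=
    ⟨hSne.image ψ, (hSconv.isPreconnected).image ψ hψS⟩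
  have hIcc : ψ '' S = Set.Icc (sInf (ψ '' S)) (sSup (ψ '' S)) :=
    eq_Icc_of_connected_compact himconn himc
  -- main set equality : {t | W t ≤ η} = ψ '' S
  have hmain : {t : ℝ | W t ≤ (η : EReal)} = ψ '' S := by
    ext t
    simp only [Set.mem_setOf_eq]
    constructor
    · intro hWt
      rw [hW t] at hWt
      set K : Set (Fin n → ℝ) := {p | p ∈ Δ ∧ ψ p = t} with hK
      -- K is nonempty
      have hKne : K.Nonempty := by
        by_contra h
        rw [Set.not_nonempty_iff_eq_empty] at h
        rw [h] at hWt
        simp only [Set.image_empty, sInf_empty] at hWt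
        exact (EReal.coe_lt_top η).not_ge hWt
      -- choose approximate minimizers
      have hchoice : ∀ k : ℕ, ∃ p : Fin n → ℝ, p ∈ K ∧
          D p < ((η + 1 / (k + 1) : ℝ) : EReal) := by
        intro k
        have hlt : sInf (D '' K) < ((η + 1 / (k + 1) : ℝ) : EReal) := by
          refine lt_of_le_of_lt hWt ?_
          rw [EReal.coe_lt_coe_iff]
          have : (0 : ℝ) < 1 / (k + 1) := by positivity
          linarith
        obtain ⟨x, hx, hxlt⟩ := sInf_lt_iff.1 hlt
        obtain ⟨p, hpK, hpx⟩ := hx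
        exact ⟨p, hpK, by rw [hpx]; exact hxlt⟩
      choose p hpK hpD using hchoice
      -- extract a convergent subsequence
      have hKcomp : IsCompact K := by
        have : K = Δ ∩ ψ ⁻¹' {t} := by
          ext q; simp [hK, Set.mem_inter_iff]
        have hKcl : IsClosed K := by
          rw [this]
          exact hψ.preimage_isClosed_of_isClosed hΔcl isClosed_singleton
        exact hΔc.of_isClosed_subset hKcl (fun q hq => hq.1)
      obtain ⟨a, haK, σ, hσ, hσt⟩ := hKcomp.tendsto_subseq hpK
      -- D a ≤ η by lower semicontinuity
      have hDa : D a ≤ (η : EReal) := by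
        have h1 : D a ≤ liminf (fun k => D (p (σ k))) atTop :=
          lsc_le_liminf_seq hD_lsc haK.1 (fun k => (hpK (σ k)).1) hσt
        have h2 : liminf (fun k => D (p (σ k))) atTop ≤ (η : EReal) := by
          have hb : ∀ k, D (p (σ k)) ≤ ((η + 1 / (σ k + 1) : ℝ) : EReal) :=
            fun k => (hpD (σ k)).le
          have h3 : liminf (fun k => D (p (σ k))) atTop
              ≤ liminf (fun k => ((η + 1 / (σ k + 1) : ℝ) : EReal)) atTop :=
            liminf_le_liminf (Eventually.of_forall hb)
          have h4 : Tendsto (fun k => ((η + 1 / (σ k + 1) : ℝ) : EReal))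
              atTop (nhds ((η : ℝ) : EReal)) := by
            rw [EReal.tendsto_coe]
            have h5 : Tendsto (fun k : ℕ => 1 / ((k : ℝ) + 1)) atTop (nhds 0) :=
              tendsto_one_div_add_atTop_nhds_zero_nat
            have h6 : Tendsto (fun k : ℕ => 1 / ((σ k : ℝ) + 1)) atTop (nhds 0) :=
              h5.comp hσ.tendsto_atTop
            simpa using tendsto_const_nhds.add h6
          rw [h4.liminf_eq] at h3
          exact h3
        exact h1.trans h2
      refine ⟨a, ?_, haK.2⟩
      rw [hS]; exact ⟨haK.1, hDa⟩
    · rintro ⟨q, hqS, rfl⟩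
      rw [hW (ψ q)]
      have hq' := hqS; rw [hS] at hq'
      have hmem : D q ∈ D '' {p | p ∈ Δ ∧ ψ p = ψ q} :=
        ⟨q, ⟨hq'.1, rfl⟩, rfl⟩
      exact (sInf_le hmem).trans hq'.2
  rw [hmain]; exact hIcc
end
end

section
/- Let φ₂ > 0, φ₃, φ₄ be real numbers (playing the roles of φ''(1), φ'''(1), φ⁽⁴⁾(1)), and consider the polynomial A(x) = −((2φ₂+φ₃)²·x⁵·γ²)/(36·φ₂²·κ₂³) − (x³/(36·φ₂²·κ₂³))·( 4(φ₂+φ₃)(2φ₂+φ₃)γ² + 3(−2φ₂² − 4φ₂φ₃ − 3φ₃² + φ₂φ₄)κ₂μ₄ + 9(2φ₂+φ₃)²κ₂³ + 6φ₂(2φ₂+φ₃)γμ_{2,c} − 6φ₂(2φ₂+φ₃)γκ₂μ_{2,d} ) − (x/(36·κ₂³))·( −12γ² + 18κ₂μ₄ + 36κ₂(μ_{2,a}+2μ_{2,b}) − 36γμ_{2,c} − 9μ_{2,c}² − 18κ₂μ_{2,c}μ_{2,d} + 9κ₂²(−2μ_{2,2} + μ_{2,d}² − 4μ_{1,2,d})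 ). Then the following are equivalent: (a) for every choice of real parameters κ₂ > 0, γ, μ₄, μ_{2,a}, μ_{2,b}, μ_{2,c}, μ_{2,d}, μ_{2,2}, μ_{1,2,d}, the coefficients of x³ and x⁵ in A(x) vanish (equivalently, A(x)/x does not depend on x); (b) φ₃ = −2φ₂ and φ₄ = −3φ₃. -/
noncomputable section

/-- The coverage-error polynomial `A(x)` of Theorem 4.1, with `φ₂, φ₃, φ₄` playing the roles of
`φ''(1), φ'''(1), φ⁽⁴⁾(1)` and the remaining arguments the population moments of the influence
functions. -/
def Apoly (φ₂ φ₃ φ₄ κ₂ γ μ₄ μ2a μ2b μ2c μ2d μ22 μ12d x : ℝ) : ℝ :=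
  -((2 * φ₂ + φ₃) ^ 2 * x ^ 5 * γ ^ 2) / (36 * φ₂ ^ 2 * κ₂ ^ 3)
    - x ^ 3 / (36 * φ₂ ^ 2 * κ₂ ^ 3) *
        (4 * (φ₂ + φ₃) * (2 * φ₂ + φ₃) * γ ^ 2
          + 3 * (-2 * φ₂ ^ 2 - 4 * φ₂ * φ₃ - 3 * φ₃ ^ 2 + φ₂ * φ₄) * κ₂ * μ₄
          + 9 * (2 * φ₂ + φ₃) ^ 2 * κ₂ ^ 3
          + 6 * φ₂ * (2 * φ₂ + φ₃) * γ * μ2c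
          - 6 * φ₂ * (2 * φ₂ + φ₃) * γ * κ₂ * μ2d)
    - x / (36 * κ₂ ^ 3) *
        (-12 * γ ^ 2 + 18 * κ₂ * μ₄ + 36 * κ₂ * (μ2a + 2 * μ2b) - 36 * γ * μ2c
          - 9 * μ2c ^ 2 - 18 * κ₂ * μ2c * μ2d
          + 9 * κ₂ ^ 2 * (-2 * μ22 + μ2d ^ 2 - 4 * μ12d))

/-- **Criterion for Bartlett correctability (generalizing Corcoran).**
For `φ₂ > 0`, the coefficients of `x³` and `x⁵` in `A(x)` vanish for every choice of the
population-moment parameters (equivalently, `A(x)/x` does not depend on `x`, i.e. `A` is linear)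
if and only if `φ₃ = −2φ₂` and `φ₄ = −3φ₃`. -/
theorem bartlett_correctability_criterion (φ₂ φ₃ φ₄ : ℝ) (hφ₂ : 0 < φ₂) :
    (∀ κ₂ γ μ₄ μ2a μ2b μ2c μ2d μ22 μ12d : ℝ, 0 < κ₂ →
        ∃ c : ℝ, ∀ x : ℝ, Apoly φ₂ φ₃ φ₄ κ₂ γ μ₄ μ2a μ2b μ2c μ2d μ22 μ12d x = c * x) ↔
      (φ₃ = -2 * φ₂ ∧ φ₄ = -3 * φ₃) := by

  constructor
  · intro h
    have hφ : φ₂ ≠ 0 := ne_of_gt hφ₂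
    obtain ⟨c, hc⟩ := h 1 1 0 0 0 0 0 0 0 one_pos
    have e1 := hc 1
    have e2 := hc 2
    have e3 := hc 3
    simp only [Apoly] at e1 e2 e3
    field_simp at e1 e2 e3
    have key : φ₂ ^ 2 * (2 * φ₂ + φ₃) ^ 2 = 0 := by
      linear_combination (-φ₂ ^ 2 / 40) * e3 + (φ₂ ^ 2 / 15) * e2 + (-φ₂ ^ 2 / 24) * e1
    have h3 : φ₃ = -2 * φ₂ := by
      have h0 := (mul_eq_zero.mp key).resolve_left (pow_ne_zero 2 hφ)
      have := pow_eq_zero_iff (n := 2) (by norm_num) |>.mp h0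
      linarith
    refine ⟨h3, ?_⟩
    obtain ⟨d, hd⟩ := h 1 0 1 0 0 0 0 0 0 one_pos
    have f1 := hd 1
    have f2 := hd 2
    simp only [Apoly] at f1 f2
    field_simp at f1 f2
    subst h3
    have key2 : φ₂ * (φ₄ - 6 * φ₂) = 0 := by
      linear_combination (-1/9 : ℝ) * f2 + (1/9 : ℝ) * f1
    have := (mul_eq_zero.mp key2).resolve_left hφ
    nlinarith
  · rintro ⟨h3, h4⟩
    subst h4; subst h3
    intro κ₂ γ μ₄ μ2a μ2b μ2c μ2d μ22 μ12d hκ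
    refine ⟨-(( -12 * γ ^ 2 + 18 * κ₂ * μ₄ + 36 * κ₂ * (μ2a + 2 * μ2b) - 36 * γ * μ2c
          - 9 * μ2c ^ 2 - 18 * κ₂ * μ2c * μ2d
          + 9 * κ₂ ^ 2 * (-2 * μ22 + μ2d ^ 2 - 4 * μ12d)) / (36 * κ₂ ^ 3)), fun x => ?_⟩
    simp only [Apoly]
    ring
end
end
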